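/- Define, for n ∈ ℕ, the polynomial P_n(X) = Σ_{j=0}^{n} (j+X)_j·C(n,j)·(-1)^{n-j} ∈ ℤ[X], where (x)_j = x(x-1)···(x-j+1) is the falling factorial and (x)_0 = 1. Then P_0(X) = 1 and for every n > 0, P_n(X) = (X+1)·P_{n-1}(X+1) − P_{n-1}(X). -/
import Mathlib

open Polynomial Finset

/-- The polynomial `P_n(X) = Σ_{j=0}^{n} (j+X)_j · C(n,j) · (-1)^{n-j}`, where the falling
factorial `(j+X)_j = (X+j)(X+j-1)⋯(X+1)` is expressed as `∏_{i=1}^{j} (X+i)`. -/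
noncomputable def Ppoly (n : ℕ) : Polynomial ℤ :=
  ∑ j ∈ Finset.range (n + 1),
    Polynomial.C (((-1) ^ (n - j) * n.choose j : ℤ)) *
      ∏ i ∈ Finset.Icc 1 j, (Polynomial.X + Polynomial.C (i : ℤ))

noncomputable def Faux (j : ℕ) : Polynomial ℤ :=
  ∏ i ∈ Finset.Icc 1 j, (Polynomial.X + Polynomial.C (i : ℤ))

lemma comp_key (j : ℕ) : (X + 1) * ((Faux j).comp (X + 1)) = Faux (j + 1) := by
  induction j with
  | zero => simp [Faux]
  | succ k ih =>
    have h1 : Faux (k + 1) = Faux k * (X + Polynomial.C ((k + 1 : ℕ) : ℤ)) := by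
      rw [Faux, Faux, Finset.prod_Icc_succ_top (by omega)]
    have h2 : Faux (k + 1 + 1) = Faux (k + 1) * (X + Polynomial.C ((k + 1 + 1 : ℕ) : ℤ)) := by
      rw [Faux, Faux, Finset.prod_Icc_succ_top (by omega)]
    rw [h1, mul_comp, add_comp, X_comp, C_comp, h2, ← mul_assoc, ih]
    push_cast
    simp only [Polynomial.C_add, Polynomial.C_1]
    ring

lemma Ppoly_eq (n : ℕ) :
    Ppoly n = ∑ j ∈ Finset.range (n + 1),
      Polynomial.C ((-1 : ℤ) ^ n * (-1) ^ j * n.choose j) * Faux j := by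
  unfold Ppoly Faux
  refine Finset.sum_congr rfl fun j hj => ?_
  simp only [Finset.mem_range] at hj
  have h2 : ((-1 : ℤ) ^ j) * ((-1) ^ j) = 1 := by
    rw [← pow_add, ← two_mul, pow_mul]; norm_num
  have h3 : (-1 : ℤ) ^ (n - j) * (-1) ^ j = (-1) ^ n := by
    rw [← pow_add]; congr 1; omega
  have h : (-1 : ℤ) ^ (n - j) = (-1) ^ n * (-1) ^ j := by
    calc (-1 : ℤ) ^ (n - j) = (-1) ^ (n - j) * ((-1) ^ j * (-1) ^ j) := by rw [h2, mul_one]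
      _ = ((-1) ^ (n - j) * (-1) ^ j) * (-1) ^ j := by ring
      _ = (-1) ^ n * (-1) ^ j := by rw [h3]
  rw [h]

theorem Ppoly_recurrence :
    Ppoly 0 = 1 ∧
      ∀ n : ℕ, 0 < n →
        Ppoly n = (Polynomial.X + 1) * (Ppoly (n - 1)).comp (Polynomial.X + 1) -
          Ppoly (n - 1) := by
  constructor
  · simp [Ppoly]
  · intro n hn
    obtain ⟨m, rfl⟩ : ∃ m, n = m + 1 := ⟨n - 1, by omega⟩
    simp only [Nat.add_sub_cancel]
    rw [Ppoly_eq m, Ppoly_eq (m + 1)]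
    rw [Polynomial.sum_comp, Finset.mul_sum]
    have hterm : ∀ j ∈ Finset.range (m + 1),
        (X + 1) * ((Polynomial.C ((-1 : ℤ) ^ m * (-1) ^ j * m.choose j) * Faux j).comp (X + 1)) =
          Polynomial.C ((-1 : ℤ) ^ m * (-1) ^ j * m.choose j) * Faux (j + 1) := by
      intro j _
      rw [mul_comp, C_comp, mul_left_comm, comp_key]
    rw [Finset.sum_congr rfl hterm]
    -- peel off the j = 0 term on the left
    rw [Finset.sum_range_succ' (fun j => Polynomial.C ((-1 : ℤ) ^ (m+1) * (-1) ^ j *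
      ((m+1).choose j)) * Faux j) (m + 1)]
    -- peel off the j = 0 term on the subtracted sum on the right
    rw [Finset.sum_range_succ' (fun j => Polynomial.C ((-1 : ℤ) ^ m * (-1) ^ j *
      (m.choose j)) * Faux j) m]
    simp only [Faux, Finset.Icc_self, pow_zero, mul_one, Nat.choose_zero_right, Nat.cast_one,
      Finset.Icc_eq_empty_of_lt (by omega : (1:ℕ) > 0)]
    simp only [Finset.prod_empty, mul_one]
    have hD : ∑ x ∈ Finset.range m,
        Polynomial.C ((-1 : ℤ) ^ m * (-1) ^ (x + 1) * (m.choose (x + 1))) *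
          ∏ i ∈ Finset.Icc 1 (x + 1), (Polynomial.X + Polynomial.C (i : ℤ)) =
        ∑ x ∈ Finset.range (m + 1),
        Polynomial.C ((-1 : ℤ) ^ m * (-1) ^ (x + 1) * (m.choose (x + 1))) *
          ∏ i ∈ Finset.Icc 1 (x + 1), (Polynomial.X + Polynomial.C (i : ℤ)) := by
      rw [Finset.sum_range_succ, Nat.choose_succ_self]
      simp
    rw [hD, sub_add_eq_sub_sub, ← Finset.sum_sub_distrib]
    have hsum : ∑ x ∈ Finset.range (m + 1),
        Polynomial.C ((-1 : ℤ) ^ (m + 1) * (-1) ^ (x + 1) * ((m + 1).choose (x + 1))) *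
          ∏ i ∈ Finset.Icc 1 (x + 1), (Polynomial.X + Polynomial.C (i : ℤ)) =
        ∑ x ∈ Finset.range (m + 1),
        (Polynomial.C ((-1 : ℤ) ^ m * (-1) ^ x * (m.choose x)) *
          (∏ i ∈ Finset.Icc 1 (x + 1), (Polynomial.X + Polynomial.C (i : ℤ))) -
         Polynomial.C ((-1 : ℤ) ^ m * (-1) ^ (x + 1) * (m.choose (x + 1))) *
          ∏ i ∈ Finset.Icc 1 (x + 1), (Polynomial.X + Polynomial.C (i : ℤ))) :=
      Finset.sum_congr rfl fun x _ => by
        rw [← sub_mul, ← Polynomial.C_sub]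
        congr 2
        push_cast [Nat.choose_succ_succ]
        ring
    rw [hsum, sub_eq_add_neg]
    congr 1
    rw [← Polynomial.C_neg]
    congr 1
    simp [pow_succ]
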